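/- Let p and q be distinct primes and let C be the companion matrix of the polynomial x^{q-1} + x^{q-2} + ⋯ + x + 1 over Z/(p). Then the block matrix f = diag(C, (C^{-1})^T) of size 2(q−1) satisfies f^T · J · f = J, where J is the block matrix with zero diagonal blocks and identity off-diagonal blocks of size q−1; moreover f has multiplicative order q and f − I is invertible. -/

import Mathlib

open Matrix

/-- The companion matrix over `ZMod p` of the polynomial
`x^(q-1) + x^(q-2) + ⋯ + x + 1`: subdiagonal of 1's and last column of -1's. -/
def Cmat (p q : ℕ) : Matrix (Fin (q - 1)) (Fin (q - 1)) (ZMod p) :=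
  fun i j => if (j : ℕ) = q - 2 then -1 else if (i : ℕ) = (j : ℕ) + 1 then 1 else 0

/-- The block matrix `diag(C, (C⁻¹)ᵀ)` of size `2(q-1)`. -/
noncomputable def fmat (p q : ℕ) :
    Matrix (Fin (q - 1) ⊕ Fin (q - 1)) (Fin (q - 1) ⊕ Fin (q - 1)) (ZMod p) :=
  Matrix.fromBlocks (Cmat p q) 0 0 ((Cmat p q)⁻¹)ᵀ

/-- The hyperbolic form matrix `J` with zero diagonal blocks and identity
off-diagonal blocks of size `q-1`. -/
def Jmat (p q : ℕ) :
    Matrix (Fin (q - 1) ⊕ Fin (q - 1)) (Fin (q - 1) ⊕ Fin (q - 1)) (ZMod p) :=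
  Matrix.fromBlocks 0 1 1 0

section Aux

variable (p q : ℕ)

open Finset

lemma Cmat_col0 (hq2 : 2 ≤ q) :
    ∀ k, k < q - 1 → ∀ i : Fin (q - 1),
      (Cmat p q ^ k) i ⟨0, by omega⟩ = if (i : ℕ) = k then 1 else 0 := by
  intro k
  induction k with
  | zero =>
    intro _ i
    simp [Matrix.one_apply, Fin.ext_iff, eq_comm]
  | succ k ih =>
    intro hk i
    have hk' : k < q - 1 := by omega
    rw [pow_succ', Matrix.mul_apply]
    have h1 : ∀ m : Fin (q - 1), (Cmat p q ^ k) m ⟨0, by omega⟩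
        = if m = (⟨k, hk'⟩ : Fin (q - 1)) then 1 else 0 := by
      intro m
      rw [ih hk' m]
      simp [Fin.ext_iff]
    calc (∑ m, Cmat p q i m * (Cmat p q ^ k) m ⟨0, by omega⟩)
        = ∑ m, if m = (⟨k, hk'⟩ : Fin (q - 1)) then Cmat p q i m else 0 := by
          refine Finset.sum_congr rfl fun m _ => ?_
          rw [h1 m, mul_ite, mul_one, mul_zero]
      _ = Cmat p q i ⟨k, hk'⟩ := by simp
      _ = if (i : ℕ) = k + 1 then 1 else 0 := by
          simp [Cmat, show k ≠ q - 2 by omega]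

lemma Cmat_pow_last (hq2 : 2 ≤ q) (i : Fin (q - 1)) :
    (Cmat p q ^ (q - 1)) i ⟨0, by omega⟩ = -1 := by
  have hstep : Cmat p q ^ (q - 1) = Cmat p q * Cmat p q ^ (q - 2) := by
    rw [← pow_succ']
    congr 1
    omega
  rw [hstep, Matrix.mul_apply]
  have h1 : ∀ m : Fin (q - 1), (Cmat p q ^ (q - 2)) m ⟨0, by omega⟩
      = if m = (⟨q - 2, by omega⟩ : Fin (q - 1)) then 1 else 0 := by
    intro m
    rw [Cmat_col0 p q hq2 (q - 2) (by omega) m]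
    simp [Fin.ext_iff]
  calc (∑ m, Cmat p q i m * (Cmat p q ^ (q - 2)) m ⟨0, by omega⟩)
      = ∑ m, if m = (⟨q - 2, by omega⟩ : Fin (q - 1)) then Cmat p q i m else 0 := by
        refine Finset.sum_congr rfl fun m _ => ?_
        rw [h1 m, mul_ite, mul_one, mul_zero]
    _ = Cmat p q i ⟨q - 2, by omega⟩ := by simp
    _ = -1 := by simp [Cmat]

lemma Smat_col0 (hq2 : 2 ≤ q) (i : Fin (q - 1)) :
    (∑ k ∈ range q, Cmat p q ^ k) i ⟨0, by omega⟩ = 0 := by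
  rw [Matrix.sum_apply]
  rw [show range q = range ((q - 1) + 1) from by rw [Nat.sub_add_cancel (by omega)],
    Finset.sum_range_succ]
  rw [Cmat_pow_last p q hq2 i]
  have h1 : (∑ k ∈ range (q - 1), (Cmat p q ^ k) i ⟨0, by omega⟩) = 1 := by
    have h2 : ∀ k ∈ range (q - 1), (Cmat p q ^ k) i ⟨0, by omega⟩
        = if k = (i : ℕ) then 1 else 0 := by
      intro k hk
      rw [Cmat_col0 p q hq2 k (Finset.mem_range.mp hk) i]
      simp [eq_comm]
    rw [Finset.sum_congr rfl h2, Finset.sum_ite_eq' (range (q - 1)) (i : ℕ)]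
    simp [i.isLt]
  rw [h1]
  ring

lemma Smat_eq_zero (hq2 : 2 ≤ q) : (∑ k ∈ range q, Cmat p q ^ k) = 0 := by
  set S := ∑ k ∈ range q, Cmat p q ^ k with hS
  have hcomm : ∀ m : ℕ, S * Cmat p q ^ m = Cmat p q ^ m * S := by
    intro m
    rw [hS, Finset.sum_mul, Finset.mul_sum]
    refine Finset.sum_congr rfl fun k _ => ?_
    rw [← pow_add, ← pow_add, add_comm]
  ext i j
  have key : (S * Cmat p q ^ (j : ℕ)) i ⟨0, by omega⟩ = S i j := by
    rw [Matrix.mul_apply]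
    have h1 : ∀ m : Fin (q - 1), (Cmat p q ^ (j : ℕ)) m ⟨0, by omega⟩
        = if m = j then 1 else 0 := by
      intro m
      rw [Cmat_col0 p q hq2 (j : ℕ) j.isLt m]
      simp [Fin.ext_iff]
    calc (∑ m, S i m * (Cmat p q ^ (j : ℕ)) m ⟨0, by omega⟩)
        = ∑ m, if m = j then S i m else 0 := by
          refine Finset.sum_congr rfl fun m _ => ?_
          rw [h1 m, mul_ite, mul_one, mul_zero]
      _ = S i j := by simp
  have key2 : (Cmat p q ^ (j : ℕ) * S) i ⟨0, by omega⟩ = 0 := by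
    rw [Matrix.mul_apply]
    refine Finset.sum_eq_zero fun m _ => ?_
    rw [hS, Smat_col0 p q hq2 m, mul_zero]
  rw [← key, hcomm, key2]
  simp

lemma Cmat_pow_q (hq2 : 2 ≤ q) : Cmat p q ^ q = 1 := by
  have h := geom_sum_mul (Cmat p q) q
  rw [Smat_eq_zero p q hq2, zero_mul] at h
  have := h.symm
  rwa [sub_eq_zero] at this

lemma Cmat_inv (hq2 : 2 ≤ q) : (Cmat p q)⁻¹ = Cmat p q ^ (q - 1) := by
  apply Matrix.inv_eq_right_inv
  rw [← pow_succ', show q - 1 + 1 = q from by omega]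
  exact Cmat_pow_q p q hq2

lemma qcast_ne_zero (hp : p.Prime) (hq : q.Prime) (hpq : p ≠ q) :
    (q : ZMod p) ≠ 0 := by
  intro h
  rw [ZMod.natCast_eq_zero_iff] at h
  exact hpq ((Nat.prime_dvd_prime_iff_eq hp hq).mp h)

lemma Cmat_sub_one_isUnit (hp : p.Prime) (hq : q.Prime) (hpq : p ≠ q) :
    IsUnit (Cmat p q - 1) := by
  haveI := Fact.mk hp
  have hq2 : 2 ≤ q := hq.two_le
  set C := Cmat p q with hC
  set c : ZMod p := (q : ZMod p) with hc
  have hcne : c ≠ 0 := qcast_ne_zero p q hp hq hpq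
  set H : Matrix (Fin (q - 1)) (Fin (q - 1)) (ZMod p) :=
    ∑ i ∈ range q, ∑ j ∈ range i, C ^ j with hH
  have key : (C - 1) * H = -(c • 1) := by
    rw [hH, Finset.mul_sum]
    have h1 : ∀ i ∈ range q, (C - 1) * ∑ j ∈ range i, C ^ j = C ^ i - 1 :=
      fun i _ => mul_geom_sum C i
    rw [Finset.sum_congr rfl h1, Finset.sum_sub_distrib, Smat_eq_zero p q hq2,
      Finset.sum_const, Finset.card_range, zero_sub, hc, Nat.cast_smul_eq_nsmul]
  have inv : (C - 1) * (-(c⁻¹) • H) = 1 := by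
    rw [Matrix.mul_smul, key, smul_neg, neg_smul, neg_neg, smul_smul,
      inv_mul_cancel₀ hcne, one_smul]
  rw [Matrix.isUnit_iff_isUnit_det]
  have := congrArg Matrix.det inv
  rw [Matrix.det_mul, Matrix.det_one] at this
  exact IsUnit.of_mul_eq_one _ this

end Aux


lemma fromBlocks_diag_pow {R : Type*} [CommRing R] {n m : Type*} [Fintype n] [Fintype m]
    [DecidableEq n] [DecidableEq m]
    (A : Matrix n n R) (B : Matrix m m R) (k : ℕ) :
    (Matrix.fromBlocks A 0 0 B) ^ k = Matrix.fromBlocks (A ^ k) 0 0 (B ^ k) := by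
  induction k with
  | zero => simp [Matrix.fromBlocks_one]
  | succ k ih =>
    rw [pow_succ, pow_succ, pow_succ, ih, Matrix.fromBlocks_multiply]
    simp


/-- For distinct primes `p` and `q`, the block matrix `f = diag(C, (C⁻¹)ᵀ)`
built from the companion matrix `C` of `x^(q-1)+⋯+x+1` over `ZMod p` satisfies
`fᵀ J f = J`, has multiplicative order `q`, and `f − 1` is invertible. -/
theorem stmt5 (p q : ℕ) (hp : p.Prime) (hq : q.Prime) (hpq : p ≠ q) :
    (fmat p q)ᵀ * Jmat p q * fmat p q = Jmat p q ∧
    orderOf (fmat p q) = q ∧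
    IsUnit (fmat p q - 1) := by
  haveI := Fact.mk hp
  haveI := Fact.mk hq
  have hq2 : 2 ≤ q := hq.two_le
  have hCq : Cmat p q ^ q = 1 := Cmat_pow_q p q hq2
  have hCinv : (Cmat p q)⁻¹ = Cmat p q ^ (q - 1) := Cmat_inv p q hq2
  have hCiC : (Cmat p q)⁻¹ * Cmat p q = 1 := by
    rw [hCinv, ← pow_succ, show q - 1 + 1 = q from by omega, hCq]
  have h2 : (Cmat p q)ᵀ * ((Cmat p q)⁻¹)ᵀ = 1 := by
    rw [← Matrix.transpose_mul, hCiC, Matrix.transpose_one]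
  have h1 : (fmat p q)ᵀ * Jmat p q * fmat p q = Jmat p q := by
    simp only [fmat, Jmat, Matrix.fromBlocks_transpose, Matrix.fromBlocks_multiply,
      Matrix.transpose_transpose, Matrix.transpose_zero]
    simp [h2, hCiC]
  have hCiq : (Cmat p q)⁻¹ ^ q = 1 := by
    rw [hCinv, ← pow_mul, mul_comm, pow_mul, hCq, one_pow]
  have hBq : ((Cmat p q)⁻¹)ᵀ ^ q = 1 := by
    rw [← Matrix.transpose_pow, hCiq, Matrix.transpose_one]
  have hfq : fmat p q ^ q = 1 := by
    rw [fmat, fromBlocks_diag_pow, hCq, hBq, Matrix.fromBlocks_one]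
  have hCu : IsUnit (Cmat p q - 1) := Cmat_sub_one_isUnit p q hp hq hpq
  have hCiu0 : IsUnit (Cmat p q)⁻¹ := by
    rw [Matrix.isUnit_iff_isUnit_det]
    have := congrArg Matrix.det hCiC
    rw [Matrix.det_mul, Matrix.det_one] at this
    exact IsUnit.of_mul_eq_one _ this
  have e1 : (-(Cmat p q)⁻¹) * (Cmat p q - 1) = (Cmat p q)⁻¹ - 1 := by
    rw [neg_mul, mul_sub, hCiC, mul_one, neg_sub]
  have h3 : IsUnit ((Cmat p q)⁻¹ - 1) := by
    rw [← e1]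
    exact (hCiu0.neg).mul hCu
  have hCiu : IsUnit (((Cmat p q)⁻¹)ᵀ - 1) := by
    have h4 : ((Cmat p q)⁻¹)ᵀ - 1 = ((Cmat p q)⁻¹ - 1)ᵀ := by
      rw [Matrix.transpose_sub, Matrix.transpose_one]
    rw [h4, Matrix.isUnit_iff_isUnit_det, Matrix.det_transpose,
      ← Matrix.isUnit_iff_isUnit_det]
    exact h3
  have hfsub : fmat p q - 1
      = Matrix.fromBlocks (Cmat p q - 1) 0 0 (((Cmat p q)⁻¹)ᵀ - 1) := by
    rw [fmat, ← Matrix.fromBlocks_one]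
    ext (i | i) (j | j) <;> simp [Matrix.fromBlocks]
  have hfu : IsUnit (fmat p q - 1) := by
    rw [hfsub, Matrix.isUnit_iff_isUnit_det, Matrix.det_fromBlocks_zero₂₁]
    exact ((Matrix.isUnit_iff_isUnit_det _).mp hCu).mul
      ((Matrix.isUnit_iff_isUnit_det _).mp hCiu)
  have hfne : fmat p q ≠ 1 := by
    intro h
    rw [h, sub_self] at hfu
    haveI : Nonempty (Fin (q - 1) ⊕ Fin (q - 1)) := ⟨Sum.inl ⟨0, by omega⟩⟩
    rw [Matrix.isUnit_iff_isUnit_det,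
      Matrix.det_zero] at hfu
    exact zero_ne_one (isUnit_zero_iff.mp hfu)
  exact ⟨h1, orderOf_eq_prime hfq hfne, hfu⟩
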